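/- A priori bound on the absolute total charge: if K is bounded by C_K, f₀ ∈ ℓ_{1,1}(ℤ) is nonnegative, and f ∈ C¹([0,T); ℓ_{1,1}(ℤ)) is a nonnegative solution of ∂_t f(t) = Q(f(t)), f(0) = f₀, which preserves mass m(f(t)) = m(f₀), then ‖f(t)‖_{1,1} ≤ ‖f₀‖_{1,1} + 2 C_K m(f₀)² t for all t ∈ [0,T). -/

import Mathlib

open scoped BigOperators

/-- The charge-exchange collision operator. -/
noncomputable def Qop (K : ℤ → ℤ → ℝ) (f g : ℤ → ℝ) (k : ℤ) : ℝ :=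
  ∑' l : ℤ, (K l (k - 1) * g l * f (k - 1) - K k (l - 1) * f k * g (l - 1)
      - K l k * g l * f k + K (k + 1) (l - 1) * f (k + 1) * g (l - 1))

lemma summable_weight {c g : ℤ → ℝ} {CK : ℝ} (hc0 : ∀ l, 0 ≤ c l) (hcb : ∀ l, c l ≤ CK)
    (hg0 : ∀ l, 0 ≤ g l) (hg : Summable g) : Summable fun l => c l * g l :=
  Summable.of_nonneg_of_le (fun l => mul_nonneg (hc0 l) (hg0 l))
    (fun l => mul_le_mul_of_nonneg_right (hcb l) (hg0 l)) (hg.mul_left CK)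

lemma tsum_weight_le {c g : ℤ → ℝ} {CK : ℝ} (hc0 : ∀ l, 0 ≤ c l) (hcb : ∀ l, c l ≤ CK)
    (hg0 : ∀ l, 0 ≤ g l) (hg : Summable g) : ∑' l, c l * g l ≤ CK * ∑' l, g l := by
  calc ∑' l, c l * g l ≤ ∑' l, CK * g l :=
        Summable.tsum_le_tsum (fun l => mul_le_mul_of_nonneg_right (hcb l) (hg0 l))
          (summable_weight hc0 hcb hg0 hg) (hg.mul_left CK)
    _ = CK * ∑' l, g l := tsum_mul_left

lemma shift_sum (u : ℤ → ℝ) (a b d : ℤ) :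
    ∑ j ∈ Finset.Icc (a + d) (b + d), u j = ∑ k ∈ Finset.Icc a b, u (k + d) := by
  rw [← Finset.map_add_right_Icc a b d, Finset.sum_map]
  exact Finset.sum_congr rfl fun i _ => rfl

lemma qop_eq {K : ℤ → ℤ → ℝ} {CK : ℝ} (hK0 : ∀ k l, 0 ≤ K k l) (hKb : ∀ k l, K k l ≤ CK)
    {g : ℤ → ℝ} (hg0 : ∀ k, 0 ≤ g k) (hg : Summable g) (k : ℤ) :
    Qop K g g k = (∑' l, K l (k-1) * g l) * g (k-1) + (∑' l, K (k+1) l * g l) * g (k+1)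
      - ((∑' l, K l k * g l) * g k + (∑' l, K k l * g l) * g k) := by
  have hw1 : Summable fun l => K l (k-1) * g l :=
    summable_weight (fun l => hK0 l (k-1)) (fun l => hKb l (k-1)) hg0 hg
  have hw2 : Summable fun j => K k j * g j :=
    summable_weight (fun l => hK0 k l) (fun l => hKb k l) hg0 hg
  have hw3 : Summable fun l => K l k * g l :=
    summable_weight (fun l => hK0 l k) (fun l => hKb l k) hg0 hg
  have hw4 : Summable fun j => K (k+1) j * g j :=
    summable_weight (fun l => hK0 (k+1) l) (fun l => hKb (k+1) l) hg0 hg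
  have hA1 : Summable fun l => K l (k-1) * g l * g (k-1) := hw1.mul_right _
  have hA2 : Summable fun l : ℤ => g k * (K k (l-1) * g (l-1)) :=
    Summable.comp_injective (f := fun j => g k * (K k j * g j)) (i := fun l : ℤ => l - 1)
      (hw2.mul_left (g k)) (Equiv.subRight (1:ℤ)).injective
  have hA3 : Summable fun l => K l k * g l * g k := hw3.mul_right _
  have hA4 : Summable fun l : ℤ => g (k+1) * (K (k+1) (l-1) * g (l-1)) :=
    Summable.comp_injective (f := fun j => g (k+1) * (K (k+1) j * g j)) (i := fun l : ℤ => l - 1)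
      (hw4.mul_left (g (k+1))) (Equiv.subRight (1:ℤ)).injective
  have step0 : Qop K g g k = ∑' l : ℤ, (K l (k-1) * g l * g (k-1)
      - g k * (K k (l-1) * g (l-1)) - K l k * g l * g k
      + g (k+1) * (K (k+1) (l-1) * g (l-1))) := by
    simp only [Qop]
    exact tsum_congr fun l => by ring
  have e2 : ∑' l : ℤ, g k * (K k (l-1) * g (l-1)) = (∑' l, K k l * g l) * g k := by
    have h := (Equiv.subRight (1:ℤ)).tsum_eq (fun j => g k * (K k j * g j))
    have h' : ∑' l : ℤ, g k * (K k (l-1) * g (l-1)) = ∑' j : ℤ, g k * (K k j * g j) := h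
    rw [h', tsum_mul_left]; ring
  have e4 : ∑' l : ℤ, g (k+1) * (K (k+1) (l-1) * g (l-1)) = (∑' l, K (k+1) l * g l) * g (k+1) := by
    have h := (Equiv.subRight (1:ℤ)).tsum_eq (fun j => g (k+1) * (K (k+1) j * g j))
    have h' : ∑' l : ℤ, g (k+1) * (K (k+1) (l-1) * g (l-1))
        = ∑' j : ℤ, g (k+1) * (K (k+1) j * g j) := h
    rw [h', tsum_mul_left]; ring
  have e1 : ∑' l : ℤ, K l (k-1) * g l * g (k-1) = (∑' l, K l (k-1) * g l) * g (k-1) :=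
    tsum_mul_right
  have e3 : ∑' l : ℤ, K l k * g l * g k = (∑' l, K l k * g l) * g k := tsum_mul_right
  rw [step0, Summable.tsum_add ((hA1.sub hA2).sub hA3) hA4, Summable.tsum_sub (hA1.sub hA2) hA3,
    Summable.tsum_sub hA1 hA2, e1, e2, e3, e4]
  ring

theorem apriori_bound_absolute_total_charge (K : ℤ → ℤ → ℝ) (CK : ℝ) (hCK : 0 < CK)
    (hK0 : ∀ k l, 0 ≤ K k l) (hKb : ∀ k l, K k l ≤ CK)
    (T : ℝ) (hT : 0 < T)
    (f₀ : ℤ → ℝ) (hf₀pos : ∀ k, 0 ≤ f₀ k)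
    (hf₀mem : Summable fun k : ℤ => (1 + |(k : ℝ)|) * |f₀ k|)
    (f : ℝ → ℤ → ℝ)
    (hinit : f 0 = f₀)
    (hpos : ∀ t ∈ Set.Ico (0 : ℝ) T, ∀ k, 0 ≤ f t k)
    (hmem : ∀ t ∈ Set.Ico (0 : ℝ) T, Summable fun k : ℤ => (1 + |(k : ℝ)|) * |f t k|)
    (hode : ∀ t ∈ Set.Ico (0 : ℝ) T, ∀ k : ℤ,
      HasDerivWithinAt (fun s => f s k) (Qop K (f t) (f t) k) (Set.Ico (0 : ℝ) T) t)
    (hmass : ∀ t ∈ Set.Ico (0 : ℝ) T, ∑' k : ℤ, f t k = ∑' k : ℤ, f₀ k) :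
    ∀ t ∈ Set.Ico (0 : ℝ) T,
      ∑' k : ℤ, (1 + |(k : ℝ)|) * |f t k| ≤
        (∑' k : ℤ, (1 + |(k : ℝ)|) * |f₀ k|) + 2 * CK * (∑' k : ℤ, f₀ k) ^ 2 * t := by
  intro t ht
  classical
  set m : ℝ := ∑' k : ℤ, f₀ k with hm
  have hm0 : 0 ≤ m := tsum_nonneg hf₀pos
  have h0mem : (0:ℝ) ∈ Set.Ico (0:ℝ) T := ⟨le_refl _, hT⟩
  -- summability facts
  have hsumm : ∀ s ∈ Set.Ico (0:ℝ) T, Summable (f s) := by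
    intro s hs
    refine Summable.of_nonneg_of_le (hpos s hs) (fun k => ?_) (hmem s hs)
    calc f s k = 1 * |f s k| := by rw [abs_of_nonneg (hpos s hs k), one_mul]
      _ ≤ (1 + |(k:ℝ)|) * |f s k| := by
          apply mul_le_mul_of_nonneg_right _ (abs_nonneg _)
          linarith [abs_nonneg ((k:ℝ))]
  have habs : ∀ s ∈ Set.Ico (0:ℝ) T, Summable fun k : ℤ => |(k:ℝ)| * f s k := by
    intro s hs
    refine Summable.of_nonneg_of_le (fun k => mul_nonneg (abs_nonneg _) (hpos s hs k))
      (fun k => ?_) (hmem s hs)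
    rw [abs_of_nonneg (hpos s hs k)]
    apply mul_le_mul_of_nonneg_right _ (hpos s hs k)
    linarith [abs_nonneg ((k:ℝ))]
  have hmass_t : ∑' k : ℤ, f t k = m := hmass t ht
  have hsf₀ : Summable f₀ := by have := hsumm 0 h0mem; rwa [hinit] at this
  have habs0 : Summable fun k : ℤ => |(k:ℝ)| * f₀ k := by
    have := habs 0 h0mem; rwa [hinit] at this
  set c : ℝ := 2 * CK * m ^ 2 with hc
  have hc0 : 0 ≤ c := by positivity
  -- key finite-sum bound
  have key : ∀ N : ℕ, ∑ k ∈ Finset.Icc (-(N:ℤ)) (N:ℤ), |(k:ℝ)| * f t k ≤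
      (∑' k : ℤ, |(k:ℝ)| * f₀ k) + c * t := by
    intro N
    obtain ⟨M, hM⟩ : ∃ M : ℤ, M = (N:ℤ) + 1 := ⟨_, rfl⟩
    set W : ℤ → ℝ := fun k => max ((N:ℝ) - |(k:ℝ)|) 0 with hW
    have hW0 : ∀ k, 0 ≤ W k := fun k => le_max_right _ _
    have hWle : ∀ k, W k ≤ (N:ℝ) := fun k =>
      max_le (by linarith [abs_nonneg ((k:ℝ))]) (Nat.cast_nonneg N)
    have hWNk : ∀ k : ℤ, (N:ℝ) - W k ≤ |(k:ℝ)| := by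
      intro k
      have := le_max_left ((N:ℝ) - |(k:ℝ)|) 0
      simp only [hW]; linarith
    have hWzero : ∀ k : ℤ, (N:ℤ) ≤ |k| → W k = 0 := by
      intro k hk
      have hk' : (N:ℝ) ≤ |(k:ℝ)| := by
        calc (N:ℝ) = ((N:ℤ):ℝ) := by norm_cast
          _ ≤ ((|k| : ℤ) : ℝ) := by exact_mod_cast hk
          _ = |(k:ℝ)| := by push_cast; ring
      simp only [hW]; exact max_eq_right (by linarith)
    have hWlip : ∀ i j : ℤ, |W i - W j| ≤ |(i:ℝ) - (j:ℝ)| := by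
      intro i j
      calc |W i - W j| ≤ |((N:ℝ) - |(i:ℝ)|) - ((N:ℝ) - |(j:ℝ)|)| := abs_max_sub_max_le_abs _ _ _
        _ = |(|(j:ℝ)| - |(i:ℝ)|)| := by congr 1; ring
        _ ≤ |(j:ℝ) - (i:ℝ)| := abs_abs_sub_abs_le_abs_sub _ _
        _ = |(i:ℝ) - (j:ℝ)| := abs_sub_comm _ _
    obtain ⟨J, hJ⟩ : ∃ J : Finset ℤ, J = Finset.Icc (-M) M := ⟨_, rfl⟩
    set F : ℝ → ℝ := fun s => ∑ k ∈ J, W k * f s k with hF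
    -- derivative lower bound
    have hDbound : ∀ s ∈ Set.Ico (0:ℝ) T,
        -c ≤ ∑ k ∈ J, W k * Qop K (f s) (f s) k := by
      intro s hs
      have hg0 : ∀ k, 0 ≤ f s k := hpos s hs
      have hgs : Summable (f s) := hsumm s hs
      have hgm : ∑' k : ℤ, f s k = m := hmass s hs
      set g : ℤ → ℝ := f s with hg
      set A : ℤ → ℝ := fun j => ∑' l, K l j * g l with hA
      set B : ℤ → ℝ := fun j => ∑' l, K j l * g l with hB
      have hA0 : ∀ j, 0 ≤ A j := fun j => tsum_nonneg fun l => mul_nonneg (hK0 l j) (hg0 l)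
      have hB0 : ∀ j, 0 ≤ B j := fun j => tsum_nonneg fun l => mul_nonneg (hK0 j l) (hg0 l)
      have hAle : ∀ j, A j ≤ CK * m := by
        intro j
        have := tsum_weight_le (fun l => hK0 l j) (fun l => hKb l j) hg0 hgs
        rwa [hgm] at this
      have hBle : ∀ j, B j ≤ CK * m := by
        intro j
        have := tsum_weight_le (fun l => hK0 j l) (fun l => hKb j l) hg0 hgs
        rwa [hgm] at this
      have hq : ∀ k, Qop K g g k
          = A (k-1) * g (k-1) + B (k+1) * g (k+1) - (A k * g k + B k * g k) :=
        fun k => qop_eq hK0 hKb hg0 hgs k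
      -- reindexing
      have ea : ∑ k ∈ J, W k * (A (k-1) * g (k-1)) = ∑ j ∈ J, W (j+1) * (A j * g j) := by
        have step1 : ∑ k ∈ J, W k * (A (k-1) * g (k-1))
            = ∑ j ∈ Finset.Icc (-M + -1) (M + -1), W (j+1) * (A j * g j) := by
          rw [shift_sum (fun j => W (j+1) * (A j * g j)) (-M) M (-1), hJ]
          refine Finset.sum_congr rfl fun k _ => ?_
          rw [show k + -1 + 1 = k by ring, show k + -1 = k - 1 by ring]
        have hzero : ∀ x : ℤ, (N:ℤ) ≤ |x+1| → W (x+1) * (A x * g x) = 0 := by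
          intro x hx; rw [hWzero _ hx, zero_mul]
        have v1 : ∑ j ∈ Finset.Icc (-M + -1) (M + -1), W (j+1) * (A j * g j)
            = ∑ j ∈ Finset.Icc (-M-1) (M+1), W (j+1) * (A j * g j) := by
          refine Finset.sum_subset (Finset.Icc_subset_Icc (by omega) (by omega)) ?_
          intro x hx hnx
          simp only [Finset.mem_Icc] at hx hnx
          exact hzero x (le_abs.mpr (by omega))
        have v2 : ∑ j ∈ J, W (j+1) * (A j * g j)
            = ∑ j ∈ Finset.Icc (-M-1) (M+1), W (j+1) * (A j * g j) := by
          rw [hJ]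
          refine Finset.sum_subset (Finset.Icc_subset_Icc (by omega) (by omega)) ?_
          intro x hx hnx
          simp only [Finset.mem_Icc] at hx hnx
          exact hzero x (le_abs.mpr (by omega))
        rw [step1, v1, ← v2]
      have eb : ∑ k ∈ J, W k * (B (k+1) * g (k+1)) = ∑ j ∈ J, W (j-1) * (B j * g j) := by
        have step1 : ∑ k ∈ J, W k * (B (k+1) * g (k+1))
            = ∑ j ∈ Finset.Icc (-M + 1) (M + 1), W (j-1) * (B j * g j) := by
          rw [shift_sum (fun j => W (j-1) * (B j * g j)) (-M) M 1, hJ]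
          refine Finset.sum_congr rfl fun k _ => ?_
          rw [show k + 1 - 1 = k by ring]
        have hzero : ∀ x : ℤ, (N:ℤ) ≤ |x-1| → W (x-1) * (B x * g x) = 0 := by
          intro x hx; rw [hWzero _ hx, zero_mul]
        have v1 : ∑ j ∈ Finset.Icc (-M + 1) (M + 1), W (j-1) * (B j * g j)
            = ∑ j ∈ Finset.Icc (-M-1) (M+1), W (j-1) * (B j * g j) := by
          refine Finset.sum_subset (Finset.Icc_subset_Icc (by omega) (by omega)) ?_
          intro x hx hnx
          simp only [Finset.mem_Icc] at hx hnx
          exact hzero x (le_abs.mpr (by omega))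
        have v2 : ∑ j ∈ J, W (j-1) * (B j * g j)
            = ∑ j ∈ Finset.Icc (-M-1) (M+1), W (j-1) * (B j * g j) := by
          rw [hJ]
          refine Finset.sum_subset (Finset.Icc_subset_Icc (by omega) (by omega)) ?_
          intro x hx hnx
          simp only [Finset.mem_Icc] at hx hnx
          exact hzero x (le_abs.mpr (by omega))
        rw [step1, v1, ← v2]
      have e : ∑ k ∈ J, W k * Qop K g g k
          = ∑ j ∈ J, ((W (j+1) - W j) * A j + (W (j-1) - W j) * B j) * g j := by
        have expand : ∑ k ∈ J, W k * Qop K g g k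
            = ∑ k ∈ J, W k * (A (k-1) * g (k-1)) + ∑ k ∈ J, W k * (B (k+1) * g (k+1))
              - ∑ k ∈ J, (W k * (A k * g k) + W k * (B k * g k)) := by
          rw [← Finset.sum_add_distrib, ← Finset.sum_sub_distrib]
          exact Finset.sum_congr rfl fun k _ => by rw [hq k]; ring
        rw [expand, ea, eb, ← Finset.sum_add_distrib, ← Finset.sum_sub_distrib]
        exact Finset.sum_congr rfl fun j _ => by ring
      rw [e]
      have hterm : ∀ j ∈ J, (-(2*CK*m)) * g j
          ≤ ((W (j+1) - W j) * A j + (W (j-1) - W j) * B j) * g j := by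
        intro j _
        have l1 : -1 ≤ W (j+1) - W j := by
          have := hWlip (j+1) j
          have e1 : |((j+1 : ℤ):ℝ) - ((j:ℤ):ℝ)| = 1 := by push_cast; norm_num
          rw [e1] at this
          have := abs_le.mp this
          linarith [this.1]
        have l2 : -1 ≤ W (j-1) - W j := by
          have := hWlip (j-1) j
          have e1 : |((j-1 : ℤ):ℝ) - ((j:ℤ):ℝ)| = 1 := by push_cast; norm_num
          rw [e1] at this
          have := abs_le.mp this
          linarith [this.1]
        have hbr : -(2*CK*m) ≤ (W (j+1) - W j) * A j + (W (j-1) - W j) * B j := by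
          nlinarith [hA0 j, hAle j, hB0 j, hBle j]
        exact mul_le_mul_of_nonneg_right hbr (hg0 j)
      have hsumg : ∑ j ∈ J, g j ≤ m := by
        have := Summable.sum_le_tsum J (fun i _ => hg0 i) hgs
        rwa [hgm] at this
      calc -c = -(2*CK*m) * m := by rw [hc]; ring
        _ ≤ -(2*CK*m) * ∑ j ∈ J, g j := by
            nlinarith [mul_nonneg (mul_nonneg hCK.le hm0) (sub_nonneg.mpr hsumg)]
        _ = ∑ j ∈ J, (-(2*CK*m)) * g j := Finset.mul_sum _ _ _
        _ ≤ _ := Finset.sum_le_sum hterm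
    -- monotonicity
    have hFd : ∀ s ∈ Set.Ico (0:ℝ) T, HasDerivWithinAt (fun u => c * u + F u)
        (c + ∑ k ∈ J, W k * Qop K (f s) (f s) k) (Set.Ico (0:ℝ) T) s := by
      intro s hs
      have h1 : HasDerivWithinAt (fun u : ℝ => c * u) (c * 1) (Set.Ico (0:ℝ) T) s :=
        (hasDerivWithinAt_id s _).const_mul c
      have h2 : HasDerivWithinAt F (∑ k ∈ J, W k * Qop K (f s) (f s) k) (Set.Ico (0:ℝ) T) s :=
        HasDerivWithinAt.fun_sum fun k _ => (hode s hs k).const_mul (W k)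
      simpa [mul_one] using h1.fun_add h2
    have hmono : MonotoneOn (fun u => c * u + F u) (Set.Ico (0:ℝ) T) := by
      refine monotoneOn_of_hasDerivWithinAt_nonneg (convex_Ico 0 T)
        (f' := fun s => c + ∑ k ∈ J, W k * Qop K (f s) (f s) k)
        (fun s hs => (hFd s hs).continuousWithinAt) ?_ ?_
      · intro x hx
        rw [interior_Ico] at hx
        exact (hFd x ⟨hx.1.le, hx.2⟩).mono interior_subset
      · intro x hx
        rw [interior_Ico] at hx
        have := hDbound x ⟨hx.1.le, hx.2⟩
        show (0:ℝ) ≤ c + ∑ k ∈ J, W k * Qop K (f x) (f x) k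
        linarith
    have hmono' : F 0 ≤ c * t + F t := by
      have := hmono h0mem ht ht.1
      simpa using this
    have hF0 : F 0 = ∑ k ∈ J, W k * f₀ k := by
      rw [hF]
      simp only [hinit]
    -- (α)
    have hα : ∑ k ∈ Finset.Icc (-(N:ℤ)) (N:ℤ), |(k:ℝ)| * f t k ≤ (N:ℝ) * m - F t := by
      have h1 : ∑ k ∈ J, f t k ≤ m := by
        have := Summable.sum_le_tsum J (fun i _ => hpos t ht i) (hsumm t ht)
        rwa [hmass_t] at this
      have h2 : ∑ k ∈ Finset.Icc (-(N:ℤ)) (N:ℤ), |(k:ℝ)| * f t k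
          ≤ ∑ k ∈ J, ((N:ℝ) - W k) * f t k := by
        have e1 : ∑ k ∈ Finset.Icc (-(N:ℤ)) (N:ℤ), |(k:ℝ)| * f t k
            = ∑ k ∈ Finset.Icc (-(N:ℤ)) (N:ℤ), ((N:ℝ) - W k) * f t k := by
          refine Finset.sum_congr rfl fun k hk => ?_
          simp only [Finset.mem_Icc] at hk
          have hkN : |(k:ℝ)| ≤ (N:ℝ) := by
            have : |k| ≤ (N:ℤ) := abs_le.mpr ⟨hk.1, hk.2⟩
            calc |(k:ℝ)| = ((|k| : ℤ) : ℝ) := by push_cast; ring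
              _ ≤ ((N:ℤ):ℝ) := by exact_mod_cast this
              _ = (N:ℝ) := by norm_cast
          have : W k = (N:ℝ) - |(k:ℝ)| := max_eq_left (by linarith)
          rw [this]; ring
        rw [e1]
        refine Finset.sum_le_sum_of_subset_of_nonneg ?_ ?_
        · rw [hJ]; apply Finset.Icc_subset_Icc <;> omega
        · intro i _ _
          exact mul_nonneg (by linarith [hWle i]) (hpos t ht i)
      have h3 : ∑ k ∈ J, ((N:ℝ) - W k) * f t k = (N:ℝ) * ∑ k ∈ J, f t k - F t := by
        simp only [hF]
        rw [Finset.mul_sum, ← Finset.sum_sub_distrib]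
        exact Finset.sum_congr rfl fun k _ => by ring
      have h4 : (N:ℝ) * ∑ k ∈ J, f t k ≤ (N:ℝ) * m :=
        mul_le_mul_of_nonneg_left h1 (Nat.cast_nonneg N)
      linarith
    -- (β)
    have hβ : (N:ℝ) * m - F 0 ≤ ∑' k : ℤ, |(k:ℝ)| * f₀ k := by
      have hcompl : ∑ k ∈ J, f₀ k + ∑' k : ((J : Set ℤ)ᶜ : Set ℤ), f₀ k = m :=
        Summable.sum_add_tsum_compl hsf₀
      have hcompl2 : ∑ k ∈ J, |(k:ℝ)| * f₀ k
          + ∑' k : ((J : Set ℤ)ᶜ : Set ℤ), |((k:ℤ):ℝ)| * f₀ k = ∑' k : ℤ, |(k:ℝ)| * f₀ k :=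
        Summable.sum_add_tsum_compl habs0
      have h4 : ∑ k ∈ J, ((N:ℝ) - W k) * f₀ k ≤ ∑ k ∈ J, |(k:ℝ)| * f₀ k :=
        Finset.sum_le_sum fun k _ => mul_le_mul_of_nonneg_right (hWNk k) (hf₀pos k)
      have h5 : ∑' k : ((J : Set ℤ)ᶜ : Set ℤ), (N:ℝ) * f₀ k
          ≤ ∑' k : ((J : Set ℤ)ᶜ : Set ℤ), |((k:ℤ):ℝ)| * f₀ k := by
        refine Summable.tsum_le_tsum (fun k => ?_) ((hsf₀.mul_left (N:ℝ)).subtype _) (habs0.subtype _)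
        have hk : ¬((k:ℤ) ∈ J) := k.2
        simp only [hJ, Finset.mem_Icc, not_and, not_le] at hk
        have hNk : (N:ℤ) ≤ |(k:ℤ)| := by
          rcases le_or_gt (-M) (k:ℤ) with h | h
          · exact le_abs.mpr (Or.inl (by have := hk h; omega))
          · exact le_abs.mpr (by omega)
        have : (N:ℝ) ≤ |((k:ℤ):ℝ)| := by
          calc (N:ℝ) = ((N:ℤ):ℝ) := by norm_cast
            _ ≤ ((|(k:ℤ)| : ℤ) : ℝ) := by exact_mod_cast hNk
            _ = |((k:ℤ):ℝ)| := by push_cast; ring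
        exact mul_le_mul_of_nonneg_right this (hf₀pos _)
      have h6 : ∑' k : ((J : Set ℤ)ᶜ : Set ℤ), (N:ℝ) * f₀ k
          = (N:ℝ) * ∑' k : ((J : Set ℤ)ᶜ : Set ℤ), f₀ k := tsum_mul_left
      have h7 : ∑ k ∈ J, ((N:ℝ) - W k) * f₀ k = (N:ℝ) * ∑ k ∈ J, f₀ k - F 0 := by
        rw [hF0, Finset.mul_sum, ← Finset.sum_sub_distrib]
        exact Finset.sum_congr rfl fun k _ => by ring
      have h8 : (N:ℝ) * m = (N:ℝ) * ∑ k ∈ J, f₀ k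
          + (N:ℝ) * ∑' k : ((J : Set ℤ)ᶜ : Set ℤ), f₀ k := by
        rw [← hcompl]; ring
      linarith
    linarith
  -- pass to the tsum
  have hfinal : ∑' k : ℤ, |(k:ℝ)| * f t k ≤ (∑' k : ℤ, |(k:ℝ)| * f₀ k) + c * t := by
    refine Summable.tsum_le_of_sum_le (habs t ht) (fun S => ?_)
    set N : ℕ := S.sup (fun k => k.natAbs) with hN
    have hSsub : S ⊆ Finset.Icc (-(N:ℤ)) (N:ℤ) := by
      intro k hk
      have h1 : k.natAbs ≤ N := Finset.le_sup (f := fun k : ℤ => k.natAbs) hk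
      simp only [Finset.mem_Icc]
      omega
    exact le_trans (Finset.sum_le_sum_of_subset_of_nonneg hSsub
      (fun i _ _ => mul_nonneg (abs_nonneg _) (hpos t ht i))) (key N)
  -- final assembly
  have hsplit : ∀ s ∈ Set.Ico (0:ℝ) T,
      ∑' k : ℤ, (1 + |(k:ℝ)|) * |f s k| = (∑' k : ℤ, f s k) + ∑' k : ℤ, |(k:ℝ)| * f s k := by
    intro s hs
    rw [← Summable.tsum_add (hsumm s hs) (habs s hs)]
    exact tsum_congr fun k => by rw [abs_of_nonneg (hpos s hs k)]; ring
  have hsplit0 : ∑' k : ℤ, (1 + |(k:ℝ)|) * |f₀ k| = m + ∑' k : ℤ, |(k:ℝ)| * f₀ k := by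
    have := hsplit 0 h0mem
    rwa [hinit] at this
  rw [hsplit t ht, hsplit0, hmass_t]
  linarith
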